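/- arXiv:1811.05843 — 2 statements merged into one kernel-verified Lean document; each statement's English description precedes it below -/
import Mathlib

section
/- For $0 \leq ct < x < 1$, the periodic convolution $\frac{1}{2\sinh(1/2)}\left[\int_0^{ct} \cosh(1/2 - x + y)\sinh(-1 - 2y + 2ct)\,dy + \int_{ct}^{x} \cosh(1/2 - x + y)\sinh(1 - 2y + 2ct)\,dy + \int_x^1 \cosh(1/2 + x - y)\sinh(1 - 2y + 2ct)\,dy\right]$ equals $\frac{2}{3}\left[\cosh(1/2)\sinh(1/2 - (x - ct)) - \sinh(1/2 - (x-ct))\cosh(1/2 - (x-ct))\right]$. -/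
open Real

private lemma exp_two_mul' (a : ℝ) : Real.exp (2*a) = Real.exp a ^ 2 := by
  rw [two_mul, Real.exp_add, sq]

private lemma exp_three_mul' (a : ℝ) : Real.exp (3*a) = Real.exp a ^ 3 := by
  rw [show (3:ℝ)*a = a + a + a by ring, Real.exp_add, Real.exp_add]; ring

private lemma key (α β a b : ℝ) :
    (∫ y in a..b, Real.cosh (α + y) * Real.sinh (β - 2*y))
      = (-(1/2)*Real.cosh (α+β-b) - (1/6)*Real.cosh (α-β+3*b))
        - (-(1/2)*Real.cosh (α+β-a) - (1/6)*Real.cosh (α-β+3*a)) := by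
  have hderiv : ∀ y ∈ Set.uIcc a b,
      HasDerivAt (fun y => -(1/2)*Real.cosh (α+β-y) - (1/6)*Real.cosh (α-β+3*y))
        (Real.cosh (α + y) * Real.sinh (β - 2*y)) y := by
    intro y _
    have h1 : HasDerivAt (fun y : ℝ => α+β-y) (-1) y := by
      simpa using (hasDerivAt_id y).const_sub (α+β)
    have h2 : HasDerivAt (fun y : ℝ => α-β+3*y) 3 y := by
      simpa using ((hasDerivAt_id y).const_mul (3:ℝ)).const_add (α-β)
    have h3 := ((h1.cosh).const_mul (-(1/2):ℝ)).sub ((h2.cosh).const_mul ((1/6):ℝ))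
    convert h3 using 1
    · rfl
    · rfl
    · rfl
    simp only [Real.sinh_eq, Real.cosh_eq, Real.exp_add, Real.exp_sub, Real.exp_neg,
      exp_two_mul', exp_three_mul']
    have := Real.exp_ne_zero α
    have := Real.exp_ne_zero β
    have := Real.exp_ne_zero y
    field_simp
    ring
  have hcont : IntervalIntegrable (fun y => Real.cosh (α + y) * Real.sinh (β - 2*y))
      MeasureTheory.volume a b := by
    apply Continuous.intervalIntegrable; continuity
  exact intervalIntegral.integral_eq_sub_of_hasDerivAt hderiv hcont

set_option maxHeartbeats 2000000 in
theorem stmt_6 (c t x : ℝ) (h0 : 0 ≤ c*t) (h1 : c*t < x) (h2 : x < 1) :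
    (1 / (2 * Real.sinh (1/2))) *
      ((∫ y in (0:ℝ)..(c*t), Real.cosh (1/2 - x + y) * Real.sinh (-1 - 2*y + 2*c*t)) +
       (∫ y in (c*t)..x, Real.cosh (1/2 - x + y) * Real.sinh (1 - 2*y + 2*c*t)) +
       (∫ y in x..(1:ℝ), Real.cosh (1/2 + x - y) * Real.sinh (1 - 2*y + 2*c*t))) =
      (2/3) * (Real.cosh (1/2) * Real.sinh (1/2 - (x - c*t)) -
        Real.sinh (1/2 - (x - c*t)) * Real.cosh (1/2 - (x - c*t))) := by
  have e1 : ∀ y : ℝ, Real.cosh (1/2 - x + y) * Real.sinh (-1 - 2*y + 2*c*t)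
      = Real.cosh ((1/2 - x) + y) * Real.sinh ((2*c*t - 1) - 2*y) := by
    intro y; rw [show (-1 - 2*y + 2*c*t : ℝ) = (2*c*t - 1) - 2*y by ring]
  have e2 : ∀ y : ℝ, Real.cosh (1/2 - x + y) * Real.sinh (1 - 2*y + 2*c*t)
      = Real.cosh ((1/2 - x) + y) * Real.sinh ((1 + 2*c*t) - 2*y) := by
    intro y; rw [show (1 - 2*y + 2*c*t : ℝ) = (1 + 2*c*t) - 2*y by ring]
  have e3 : ∀ y : ℝ, Real.cosh (1/2 + x - y) * Real.sinh (1 - 2*y + 2*c*t)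
      = Real.cosh ((-(1/2) - x) + y) * Real.sinh ((1 + 2*c*t) - 2*y) := by
    intro y
    rw [show ((-(1/2) - x) + y : ℝ) = -(1/2 + x - y) by ring, Real.cosh_neg,
      show (1 - 2*y + 2*c*t : ℝ) = (1 + 2*c*t) - 2*y by ring]
  simp only [e1, e2, e3, key]
  have hs : (2 * Real.sinh (1/2)) ≠ 0 := by
    have : (0:ℝ) < Real.sinh (1/2) := by positivity
    linarith
  rw [div_mul_eq_mul_div, one_mul, div_eq_iff hs]
  have h2ct : Real.exp (2*c*t) = Real.exp (c*t) ^ 2 := by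
    rw [show (2*c*t : ℝ) = 2*(c*t) by ring, exp_two_mul']
  have h1e : Real.exp (1:ℝ) = Real.exp (1/2:ℝ) ^ 2 := by
    rw [← exp_two_mul']; norm_num
  simp only [Real.sinh_eq, Real.cosh_eq, Real.exp_add, Real.exp_sub, Real.exp_neg,
    exp_two_mul', exp_three_mul', h2ct, h1e]
  have hx := Real.exp_ne_zero x
  have hct := Real.exp_ne_zero (c*t)
  have hh := Real.exp_ne_zero (1/2 : ℝ)
  field_simp
  rw [Real.exp_zero]
  ring
end

section
/- For $0 < x < ct < 1$, the periodic convolution $G * \sinh(2\zeta)(x)$, with $G(x) = \frac{\cosh(1/2 - x + [x])}{2\sinh(1/2)}$ and $\zeta(y) = 1/2 - (y - ct) + [y - ct]$, equals $\frac{2}{3}\left[-\cosh(1/2)\sinh(1/2 + (x - ct)) + \sinh(1/2 + (x - ct))\cosh(1/2 + (x - ct))\right]$. -/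
open Real MeasureTheory intervalIntegral

private lemma key7 (S u v α β : ℝ) :
    (∫ y in α..β, Real.cosh (y + u) * Real.sinh (v - 2*y) / (2*S))
    = ((Real.cosh (u + v - α) - Real.cosh (u + v - β))
        + (Real.cosh (v - u - (α + α + α)) - Real.cosh (v - u - (β + β + β)))/3)/(4*S) := by
  have h := intervalIntegral.integral_eq_sub_of_hasDerivAt
    (f := fun y => (-Real.cosh (u + v - y) - Real.cosh (v - u - (y + y + y))/3)/(4*S))
    (f' := fun y => Real.cosh (y + u) * Real.sinh (v - 2*y) / (2*S)) (a := α) (b := β)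
    ?_ ?_
  · rw [h]; ring
  · intro y hy
    have h1 : HasDerivAt (fun y : ℝ => u + v - y) (-1) y := by
      simpa using (hasDerivAt_id y).const_sub (u + v)
    have h2 : HasDerivAt (fun y : ℝ => v - u - (y + y + y)) (-3) y := by
      have h3 : HasDerivAt (fun y : ℝ => y + y + y) (1 + 1 + 1) y :=
        ((hasDerivAt_id y).add (hasDerivAt_id y)).add (hasDerivAt_id y)
      have := h3.const_sub (v - u)
      norm_num at this ⊢
      exact this
    have H := ((h1.cosh.neg).sub ((h2.cosh).div_const 3)).div_const (4*S)
    convert H using 1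
    · rfl
    · rfl
    have E1 : Real.sinh (u + v - y)
        = Real.sinh (v - 2*y) * Real.cosh (y + u) + Real.cosh (v - 2*y) * Real.sinh (y + u) := by
      rw [show u + v - y = (v - 2*y) + (y + u) by ring, Real.sinh_add]
    have E2 : Real.sinh (v - u - (y + y + y))
        = Real.sinh (v - 2*y) * Real.cosh (y + u) - Real.cosh (v - 2*y) * Real.sinh (y + u) := by
      rw [show v - u - (y + y + y) = (v - 2*y) - (y + u) by ring, Real.sinh_sub]
    rw [E1, E2]; ring
  · apply Continuous.intervalIntegrable
    continuity

set_option maxHeartbeats 1000000 in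
private lemma final7 (x s : ℝ) :
    ((Real.cosh ((1/2 - x) + (s+s-1) - 0) - Real.cosh ((1/2 - x) + (s+s-1) - x))
      + (Real.cosh ((s+s-1) - (1/2 - x) - (0+0+0)) - Real.cosh ((s+s-1) - (1/2 - x) - (x+x+x)))/3)/(4*Real.sinh (1/2))
    + ((Real.cosh ((-(1/2) - x) + (s+s-1) - x) - Real.cosh ((-(1/2) - x) + (s+s-1) - s))
      + (Real.cosh ((s+s-1) - (-(1/2) - x) - (x+x+x)) - Real.cosh ((s+s-1) - (-(1/2) - x) - (s+s+s)))/3)/(4*Real.sinh (1/2))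
    + ((Real.cosh ((-(1/2) - x) + (s+s+1) - s) - Real.cosh ((-(1/2) - x) + (s+s+1) - 1))
      + (Real.cosh ((s+s+1) - (-(1/2) - x) - (s+s+s)) - Real.cosh ((s+s+1) - (-(1/2) - x) - (1+1+1)))/3)/(4*Real.sinh (1/2))
    = (2/3) * (-(Real.cosh (1/2) * Real.sinh (1/2 + (x - s))) +
        Real.sinh (1/2 + (x - s)) * Real.cosh (1/2 + (x - s))) := by
  have e1 : Real.exp 1 = Real.exp (1/2) * Real.exp (1/2) := by
    rw [← Real.exp_add]; norm_num
  have hS : (0:ℝ) < Real.sinh (1/2) := Real.sinh_pos_iff.2 (by norm_num)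
  rw [← add_div, ← add_div, div_eq_iff (by positivity : (4:ℝ)*Real.sinh (1/2) ≠ 0)]
  have h1 := Real.exp_ne_zero x
  have h2 := Real.exp_ne_zero s
  have h3 := Real.exp_ne_zero (1/2 : ℝ)
  simp only [Real.cosh_eq, Real.sinh_eq, Real.exp_add, Real.exp_sub, Real.exp_neg,
    Real.exp_zero, e1]
  field_simp
  ring

set_option maxHeartbeats 1000000 in
theorem stmt_7 (c t x : ℝ) (h0 : 0 < x) (h1 : x < c*t) (h2 : c*t < 1)
    (G ζ : ℝ → ℝ)
    (hG : ∀ y, G y = Real.cosh (1/2 - y + (⌊y⌋ : ℝ)) / (2 * Real.sinh (1/2)))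
    (hζ : ∀ y, ζ y = 1/2 - (y - c*t) + (⌊y - c*t⌋ : ℝ)) :
    (∫ y in (0:ℝ)..1, G (x - y) * Real.sinh (2 * ζ y)) =
      (2/3) * (-(Real.cosh (1/2) * Real.sinh (1/2 + (x - c*t))) +
        Real.sinh (1/2 + (x - c*t)) * Real.cosh (1/2 + (x - c*t))) := by
  have flzero : ∀ z : ℝ, 0 ≤ z → z < 1 → ⌊z⌋ = 0 := by
    intro z ha hb
    rw [Int.floor_eq_iff]
    constructor <;> push_cast <;> linarith
  have flneg : ∀ z : ℝ, -1 ≤ z → z < 0 → ⌊z⌋ = -1 := by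
    intro z ha hb
    rw [Int.floor_eq_iff]
    constructor <;> push_cast <;> linarith
  set s := c*t with hs
  have hx1 : x < 1 := h1.trans h2
  have hs0 : 0 < s := h0.trans h1
  set f : ℝ → ℝ := fun y => G (x - y) * Real.sinh (2 * ζ y) with hf
  set g1 : ℝ → ℝ := fun y => Real.cosh (y + (1/2 - x)) * Real.sinh ((s+s-1) - 2*y) / (2*Real.sinh (1/2)) with hg1
  set g2 : ℝ → ℝ := fun y => Real.cosh (y + (-(1/2) - x)) * Real.sinh ((s+s-1) - 2*y) / (2*Real.sinh (1/2)) with hg2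
  set g3 : ℝ → ℝ := fun y => Real.cosh (y + (-(1/2) - x)) * Real.sinh ((s+s+1) - 2*y) / (2*Real.sinh (1/2)) with hg3
  -- piece 1 pointwise on [0, x]
  have hfg1 : Set.EqOn f g1 (Set.uIcc (0:ℝ) x) := by
    intro y hy
    rw [Set.uIcc_of_le h0.le] at hy
    obtain ⟨hy0, hyx⟩ := hy
    have e1 : ⌊x - y⌋ = 0 := flzero _ (by linarith) (by linarith)
    have e2 : ⌊y - s⌋ = -1 := flneg _ (by linarith) (by linarith)
    simp only [hf, hg1, hG, hζ, e1, e2]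
    rw [show (1:ℝ)/2 - (x - y) + ((0:ℤ):ℝ) = y + (1/2 - x) by push_cast; ring,
      show 2 * (1/2 - (y - s) + ((-1:ℤ):ℝ)) = (s+s-1) - 2*y by push_cast; ring]
    ring
  -- piece 2 a.e. on [x, s]
  have hfg2 : ∀ᵐ (y : ℝ), y ∈ Set.uIoc x s → f y = g2 y := by
    have hzs : (volume : Measure ℝ) {s} = 0 := measure_singleton s
    filter_upwards [measure_eq_zero_iff_ae_notMem.mp hzs] with y hy hmem
    rw [Set.uIoc_of_le h1.le] at hmem
    obtain ⟨hyx, hys⟩ := hmem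
    have hys' : y < s := lt_of_le_of_ne hys (by simpa using hy)
    have e1 : ⌊x - y⌋ = -1 := flneg _ (by linarith) (by linarith)
    have e2 : ⌊y - s⌋ = -1 := flneg _ (by linarith) (by linarith)
    simp only [hf, hg2, hG, hζ, e1, e2]
    rw [show (1:ℝ)/2 - (x - y) + ((-1:ℤ):ℝ) = y + (-(1/2) - x) by push_cast; ring,
      show 2 * (1/2 - (y - s) + ((-1:ℤ):ℝ)) = (s+s-1) - 2*y by push_cast; ring]
    ring
  -- piece 3 pointwise on [s, 1]
  have hfg3 : Set.EqOn f g3 (Set.uIcc s 1) := by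
    intro y hy
    rw [Set.uIcc_of_le h2.le] at hy
    obtain ⟨hys, hy1⟩ := hy
    have e1 : ⌊x - y⌋ = -1 := flneg _ (by linarith) (by linarith)
    have e2 : ⌊y - s⌋ = 0 := flzero _ (by linarith) (by linarith)
    simp only [hf, hg3, hG, hζ, e1, e2]
    rw [show (1:ℝ)/2 - (x - y) + ((-1:ℤ):ℝ) = y + (-(1/2) - x) by push_cast; ring,
      show 2 * (1/2 - (y - s) + ((0:ℤ):ℝ) ) = (s+s+1) - 2*y by push_cast; ring]
    ring
  -- integrability of f on each piece
  have hcg1 : IntervalIntegrable g1 volume 0 x := (by fun_prop : Continuous g1).intervalIntegrable _ _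
  have hcg2 : IntervalIntegrable g2 volume x s := (by fun_prop : Continuous g2).intervalIntegrable _ _
  have hcg3 : IntervalIntegrable g3 volume s 1 := (by fun_prop : Continuous g3).intervalIntegrable _ _
  have hint1 : IntervalIntegrable f volume 0 x := by
    apply hcg1.congr_ae
    exact ae_restrict_of_forall_mem measurableSet_uIoc
      (fun y hy => (hfg1 (Set.uIoc_subset_uIcc hy)).symm)
  have hint2 : IntervalIntegrable f volume x s := by
    apply hcg2.congr_ae
    have h := (MeasureTheory.ae_restrict_iff' measurableSet_uIoc).2 hfg2
    exact h.mono fun y hy => hy.symm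
  have hint3 : IntervalIntegrable f volume s 1 := by
    apply hcg3.congr_ae
    exact ae_restrict_of_forall_mem measurableSet_uIoc
      (fun y hy => (hfg3 (Set.uIoc_subset_uIcc hy)).symm)
  have split : (∫ y in (0:ℝ)..1, f y)
      = (∫ y in (0:ℝ)..x, f y) + (∫ y in x..s, f y) + (∫ y in s..(1:ℝ), f y) := by
    rw [integral_add_adjacent_intervals hint1 hint2,
      integral_add_adjacent_intervals (hint1.trans hint2) hint3]
  calc (∫ y in (0:ℝ)..1, f y)
      = (∫ y in (0:ℝ)..x, g1 y) + (∫ y in x..s, g2 y) + (∫ y in s..(1:ℝ), g3 y) := by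
        rw [split, intervalIntegral.integral_congr hfg1,
          intervalIntegral.integral_congr_ae hfg2, intervalIntegral.integral_congr hfg3]
    _ = (2/3) * (-(Real.cosh (1/2) * Real.sinh (1/2 + (x - s))) +
        Real.sinh (1/2 + (x - s)) * Real.cosh (1/2 + (x - s))) := by
        rw [hg1, hg2, hg3, key7, key7, key7]
        exact final7 x s
end
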